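/- Let f be entire and non-constant, and let G be the group of affine maps φ(z) = cz + b with f ∘ φ = f. Then for every z ∈ ℂ, the orbit {φ(z) : φ ∈ G} is a discrete subset of ℂ (has no accumulation point in ℂ). -/

import Mathlib

/-- For non-constant entire `f`, the orbit of any point under the group of
affine automorphic maps has no accumulation point in `ℂ`. -/
theorem stmt9 (f : ℂ → ℂ) (hf : Differentiable ℂ f)
    (hnc : ¬ ∃ C : ℂ, ∀ w, f w = C) (z : ℂ) :
    ∀ x : ℂ, ¬ AccPt x (Filter.principal
      {w : ℂ | ∃ c b : ℂ, c ≠ 0 ∧ (∀ u, f (c * u + b) = f u) ∧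
        w = c * z + b}) := by
  intro x hx
  apply hnc
  refine ⟨f z, fun w => ?_⟩
  have hfreq : ∃ᶠ y in nhdsWithin x {x}ᶜ, f y = f z := by
    have := accPt_iff_frequently.mp hx
    rw [AccPt, Filter.inf_principal_neBot_iff] at hx
    have : ∃ᶠ y in nhdsWithin x {x}ᶜ, y ∈
        {w : ℂ | ∃ c b : ℂ, c ≠ 0 ∧ (∀ u, f (c * u + b) = f u) ∧ w = c * z + b} := by
      rw [Filter.frequently_iff]
      intro U hU
      obtain ⟨y, hy⟩ := hx U hU
      exact ⟨y, hy.1, hy.2⟩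
    refine this.mono ?_
    rintro y ⟨c, b, hc, hfcb, rfl⟩
    exact hfcb z
  have hfa : AnalyticOnNhd ℂ f Set.univ := Complex.analyticOnNhd_univ_iff_differentiable.mpr hf
  have hga : AnalyticOnNhd ℂ (fun _ : ℂ => f z) Set.univ := fun y _ => analyticAt_const
  have := hfa.eq_of_frequently_eq hga hfreq
  exact congrFun this w
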